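/- Let π be a set of primes, G a finite group, N a normal subgroup of G and H a subgroup with N ≤ H ≤ G. If H/N is N^π-Dsubnormal in G/N, then H is N^π-Dsubnormal in G. -/

import Mathlib

/-- A (finite) group is a `π`-group if every prime dividing its order lies in `π`. -/
def IsPiGroup (π : Set ℕ) (G : Type*) [Group G] : Prop :=
  ∀ p : ℕ, p.Prime → p ∣ Nat.card G → p ∈ π

/-- `O^π(G)`: the smallest normal subgroup of `G` whose quotient is a `π`-group
(recall that `N.index = Nat.card (G ⧸ N)`). -/
def piResidual (π : Set ℕ) (G : Type*) [Group G] : Subgroup G :=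
  ⨅ N ∈ {N : Subgroup G | N.Normal ∧ ∀ p : ℕ, p.Prime → p ∣ N.index → p ∈ π}, N

/-- `O_π(G)`: the largest normal `π`-subgroup of `G`. -/
def piCore (π : Set ℕ) (G : Type*) [Group G] : Subgroup G :=
  ⨆ N ∈ {N : Subgroup G | N.Normal ∧ IsPiGroup π N}, N

/-- `O^π(H)` for a subgroup `H ≤ G`, regarded as a subgroup of `G`. -/
def piResidualIn (π : Set ℕ) {G : Type*} [Group G] (H : Subgroup G) : Subgroup G :=
  (piResidual π H).map H.subtype

/-- `H` is `N^π`-Dnormal in `G`: if `|π| ≤ 1` this means `H` is normal in `G`; if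
`|π| ≥ 2` it means that `O^π(H)` is normal in `G` and `O^π(G)` normalizes `H`. -/
def IsDnormal (π : Set ℕ) {G : Type*} [Group G] (H : Subgroup G) : Prop :=
  (π.Subsingleton ∧ H.Normal) ∨
  (¬ π.Subsingleton ∧ (piResidualIn π H).Normal ∧ piResidual π G ≤ Subgroup.normalizer (H : Set G))

/-- `S` is `N^π`-Dsubnormal in `G`: there is a chain `S = S₀ ≤ S₁ ≤ ⋯ ≤ Sₙ = G`
with each `Sᵢ` being `N^π`-Dnormal in `Sᵢ₊₁`. -/
def IsDsubnormal (π : Set ℕ) {G : Type*} [Group G] (S : Subgroup G) : Prop :=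
  ∃ (n : ℕ) (c : Fin (n + 1) → Subgroup G), c 0 = S ∧ c (Fin.last n) = ⊤ ∧
    ∀ i : Fin n, c i.castSucc ≤ c i.succ ∧
      IsDnormal π ((c i.castSucc).subgroupOf (c i.succ))

/-- `H` is subnormal in `G`. -/
def IsSubnormal' {G : Type*} [Group G] (H : Subgroup G) : Prop :=
  ∃ (n : ℕ) (c : Fin (n + 1) → Subgroup G), c 0 = H ∧ c (Fin.last n) = ⊤ ∧
    ∀ i : Fin n, c i.castSucc ≤ c i.succ ∧
      ((c i.castSucc).subgroupOf (c i.succ)).Normal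

/-- The class `N^π`: groups that are the (internal) direct product of a `π`-group and a
nilpotent `π'`-group. -/
def IsNPiGroup (π : Set ℕ) (G : Type*) [Group G] : Prop :=
  ∃ H K : Subgroup G, H.Normal ∧ K.Normal ∧ H ⊓ K = ⊥ ∧ H ⊔ K = ⊤ ∧
    IsPiGroup π H ∧ IsPiGroup πᶜ K ∧ Group.IsNilpotent K

/-- The `N^π`-residual `G^{N^π}`: the smallest normal subgroup of `G` whose quotient
belongs to the class `N^π`. -/
def nPiResidual (π : Set ℕ) (G : Type*) [Group G] : Subgroup G :=
  ⨅ N ∈ {N : Subgroup G | ∃ h : N.Normal, letI := h; IsNPiGroup π (G ⧸ N)}, N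

/-- `G` is `π'`-soluble: it has a normal series each of whose factors is either a
`π`-group or a `p`-group for some prime `p ∉ π`. -/
def IsPiPrimeSoluble (π : Set ℕ) (G : Type*) [Group G] : Prop :=
  ∃ (n : ℕ) (c : Fin (n + 1) → Subgroup G), c 0 = ⊥ ∧ c (Fin.last n) = ⊤ ∧
    ∀ i : Fin n, c i.castSucc ≤ c i.succ ∧
      ((c i.castSucc).subgroupOf (c i.succ)).Normal ∧
      ((∀ p : ℕ, p.Prime → p ∣ ((c i.castSucc).subgroupOf (c i.succ)).index → p ∈ π) ∨
        ∃ p : ℕ, p.Prime ∧ p ∉ π ∧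
          ∃ k : ℕ, ((c i.castSucc).subgroupOf (c i.succ)).index = p ^ k)

/-- An `N^π`-Fitting set of `G`. -/
def IsNPiFittingSet (π : Set ℕ) {G : Type*} [Group G] (F : Set (Subgroup G)) : Prop :=
  F.Nonempty ∧
  (∀ S ∈ F, ∀ T : Subgroup G, T ≤ S → IsDsubnormal π (T.subgroupOf S) → T ∈ F) ∧
  (∀ S ∈ F, ∀ T ∈ F, IsDnormal π (S.subgroupOf (S ⊔ T)) →
    IsDnormal π (T.subgroupOf (S ⊔ T)) → S ⊔ T ∈ F) ∧
  (∀ S ∈ F, ∀ x : G, S.map (MulAut.conj x).toMonoidHom ∈ F)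

/-- The `F`-radical `H_F` of a subgroup `H` of `G`: the join of all subgroups of `H`
belonging to `F` that are normal in `H`. -/
def fittingRadical {G : Type*} [Group G] (F : Set (Subgroup G)) (H : Subgroup G) : Subgroup G :=
  ⨆ S ∈ {S : Subgroup G | S ∈ F ∧ S ≤ H ∧ (S.subgroupOf H).Normal}, S

/-- `M` is an `F`-maximal subgroup of `K`. -/
def IsFMaximalIn {G : Type*} [Group G] (F : Set (Subgroup G)) (M K : Subgroup G) : Prop :=
  M ∈ F ∧ M ≤ K ∧ ∀ S ∈ F, S ≤ K → M ≤ S → S = M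

/-- `V` is an `F`-injector of `G`. -/
def IsInjector {G : Type*} [Group G] (F : Set (Subgroup G)) (V : Subgroup G) : Prop :=
  ∀ K : Subgroup G, IsSubnormal' K → IsFMaximalIn F (V ⊓ K) K

/-- `V` is an `F`-injector of the subgroup `N` of `G`. -/
def IsInjectorIn {G : Type*} [Group G] (F : Set (Subgroup G)) (V N : Subgroup G) : Prop :=
  V ≤ N ∧ ∀ K : Subgroup G, K ≤ N → IsSubnormal' (K.subgroupOf N) → IsFMaximalIn F (V ⊓ K) K

/-- `M` is an `N^π`-maximal subgroup of `X`. -/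
def IsNPiMaximal (π : Set ℕ) {X : Type*} [Group X] (M : Subgroup X) : Prop :=
  IsNPiGroup π M ∧ ∀ M' : Subgroup X, IsNPiGroup π M' → M ≤ M' → M' = M

/-- `U` is an `N^π`-projector of `G`: `UK/K` is `N^π`-maximal in `G/K` for every
normal subgroup `K` of `G`. -/
def IsNPiProjector (π : Set ℕ) {G : Type*} [Group G] (U : Subgroup G) : Prop :=
  ∀ K : Subgroup G, ∀ hK : K.Normal,
    letI := hK
    IsNPiMaximal π ((U ⊔ K).map (QuotientGroup.mk' K))

/-- An `N^π`-Fitting class of (finite) groups: a non-empty isomorphism-closed class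
closed under `N^π`-Dnormal subgroups and under joins of pairs of `N^π`-Dnormal
subgroups. -/
def IsNPiFittingClass (π : Set ℕ) (F : (H : Type) → [_inst : Group H] → Prop) : Prop :=
  (∃ (H : Type) (g : Group H) (_ : Finite H), F H (_inst := g)) ∧
  (∀ (H K : Type) [Group H] [Group K] [Finite H] [Finite K],
    F H → Nonempty (H ≃* K) → F K) ∧
  (∀ (H : Type) [Group H] [Finite H] (N : Subgroup H),
    F H → IsDnormal π N → F ↥N) ∧
  (∀ (H : Type) [Group H] [Finite H] (M N : Subgroup H),
    F ↥M → F ↥N → IsDnormal π M → IsDnormal π N → M ⊔ N = ⊤ → F H)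

section Helpers

variable (π : Set ℕ)

lemma piResidual_normal (G : Type*) [Group G] : (piResidual π G).Normal := by
  constructor
  intro n hn g
  simp only [piResidual, Subgroup.mem_iInf] at hn ⊢
  intro N hN
  exact hN.1.conj_mem n (hn N hN) g

lemma piResidual_le {G : Type*} [Group G] {N : Subgroup G} (h1 : N.Normal)
    (h2 : ∀ p : ℕ, p.Prime → p ∣ N.index → p ∈ π) : piResidual π G ≤ N :=
  iInf₂_le N ⟨h1, h2⟩

lemma piResidual_index (G : Type*) [Group G] [Finite G] :
    ∀ p : ℕ, p.Prime → p ∣ (piResidual π G).index → p ∈ π := by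
  classical
  haveI : Finite (Subgroup G) :=
    Finite.of_injective (fun H : Subgroup G => (H : Set G)) SetLike.coe_injective
  set S : Set (Subgroup G) :=
    {N : Subgroup G | N.Normal ∧ ∀ p : ℕ, p.Prime → p ∣ N.index → p ∈ π} with hS
  have htop : (⊤ : Subgroup G) ∈ S := by
    refine ⟨inferInstance, fun p hp hd => ?_⟩
    rw [Subgroup.index_top, Nat.dvd_one] at hd
    exact absurd hd hp.ne_one
  have hclosed : ∀ A ∈ S, ∀ B ∈ S, A ⊓ B ∈ S := by
    rintro A ⟨hAn, hAi⟩ B ⟨hBn, hBi⟩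
    haveI := hBn
    refine ⟨⟨fun n hn g => ⟨hAn.conj_mem n hn.1 g, hBn.conj_mem n hn.2 g⟩⟩, ?_⟩
    intro p hp hd
    have h1 : (A ⊓ B).relIndex A * A.index = (A ⊓ B).index :=
      Subgroup.relIndex_mul_index inf_le_left
    have h2 : (A ⊓ B).relIndex A = B.relIndex A := Subgroup.inf_relIndex_left A B
    have h3 : B.relIndex A ∣ B.index := Subgroup.relIndex_dvd_index_of_normal B A
    rw [← h1, h2] at hd
    rcases (hp.dvd_mul.mp hd) with h | h
    · exact hBi p hp (h.trans h3)
    · exact hAi p hp h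
  have hfin : S.Finite := Set.toFinite S
  have hne : hfin.toFinset.Nonempty := ⟨⊤, hfin.mem_toFinset.mpr htop⟩
  have hmem : hfin.toFinset.inf' hne id ∈ S :=
    Finset.inf'_mem S hclosed _ hne id (fun i hi => hfin.mem_toFinset.mp hi)
  have heq : piResidual π G = hfin.toFinset.inf' hne id := by
    apply le_antisymm
    · refine Finset.le_inf' hne id fun b hb => ?_
      obtain ⟨hb1, hb2⟩ := hfin.mem_toFinset.mp hb
      exact piResidual_le π hb1 hb2
    · exact le_iInf₂ fun N hN => Finset.inf'_le id (hfin.mem_toFinset.mpr hN)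
  rw [heq]
  exact hmem.2

lemma piResidual_map_equiv {G G' : Type*} [Group G] [Group G'] [Finite G] (e : G ≃* G') :
    (piResidual π G).map e.toMonoidHom = piResidual π G' := by
  haveI : Finite G' := Finite.of_equiv G e.toEquiv
  apply le_antisymm
  · rw [Subgroup.map_le_iff_le_comap]
    refine piResidual_le π ((piResidual_normal π G').comap e.toMonoidHom) ?_
    intro p hp hd
    refine piResidual_index π G' p hp ?_
    rwa [Subgroup.index_comap_of_surjective _ e.surjective] at hd
  · refine piResidual_le π ((piResidual_normal π G).map e.toMonoidHom e.surjective) ?_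
    intro p hp hd
    have hidx : (((piResidual π G).map e.toMonoidHom).comap e.toMonoidHom).index =
        ((piResidual π G).map e.toMonoidHom).index :=
      Subgroup.index_comap_of_surjective _ e.surjective
    rw [Subgroup.comap_map_eq_self_of_injective e.injective] at hidx
    rw [← hidx] at hd
    exact piResidual_index π G p hp hd

lemma piResidualIn_map_equiv {G G' : Type*} [Group G] [Group G'] [Finite G] (e : G ≃* G')
    (H : Subgroup G) :
    (piResidualIn π H).map e.toMonoidHom = piResidualIn π (H.map e.toMonoidHom) := by
  haveI : Finite G' := Finite.of_equiv G e.toEquiv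
  have h1 : piResidual π (H.map (e : G →* G')) =
      (piResidual π H).map (e.subgroupMap H).toMonoidHom :=
    (piResidual_map_equiv π (e.subgroupMap H)).symm
  unfold piResidualIn
  have hc : e.toMonoidHom = (e : G →* G') := rfl
  rw [hc]
  rw [h1, Subgroup.map_map, Subgroup.map_map]
  have h2 : (H.map (e : G →* G')).subtype.comp (e.subgroupMap H).toMonoidHom =
      (e : G →* G').comp H.subtype := by
    ext x
    exact e.coe_subgroupMap_apply H x
  rw [h2]

end Helpers

section Helpers2

variable (π : Set ℕ)

lemma piResidualIn_le {G : Type*} [Group G] (H : Subgroup G) : piResidualIn π H ≤ H :=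
  Subgroup.map_subtype_le _

lemma piResidualIn_subgroupOf {G : Type*} [Group G] (H : Subgroup G) :
    (piResidualIn π H).subgroupOf H = piResidual π H :=
  Subgroup.comap_map_eq_self_of_injective H.subtype_injective _

lemma piResidualIn_subgroupOf_normal {G : Type*} [Group G] (H : Subgroup G) :
    ((piResidualIn π H).subgroupOf H).Normal := by
  rw [piResidualIn_subgroupOf]
  exact piResidual_normal π H

lemma piResidualIn_relIndex {G : Type*} [Group G] [Finite G] (H : Subgroup G) :
    ∀ p : ℕ, p.Prime → p ∣ (piResidualIn π H).relIndex H → p ∈ π := by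
  intro p hp hd
  refine piResidual_index π H p hp ?_
  rwa [Subgroup.relIndex, piResidualIn_subgroupOf] at hd

lemma piResidualIn_le_of {G : Type*} [Group G] [Finite G] {H K : Subgroup G} (hKH : K ≤ H)
    (hn : (K.subgroupOf H).Normal) (hi : ∀ p : ℕ, p.Prime → p ∣ K.relIndex H → p ∈ π) :
    piResidualIn π H ≤ K := by
  have h1 : piResidual π H ≤ K.subgroupOf H := piResidual_le π hn hi
  calc piResidualIn π H = (piResidual π H).map H.subtype := rfl
    _ ≤ (K.subgroupOf H).map H.subtype := Subgroup.map_mono h1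
    _ = K ⊓ H := Subgroup.subgroupOf_map_subtype K H
    _ ≤ K := inf_le_left

lemma subgroupOf_normal_iff {G : Type*} [Group G] {K H : Subgroup G} (hKH : K ≤ H) :
    (K.subgroupOf H).Normal ↔ ∀ h ∈ H, ∀ k ∈ K, h * k * h⁻¹ ∈ K := by
  constructor
  · intro hn h hh k hk
    have := hn.conj_mem ⟨k, hKH hk⟩ (by simpa [Subgroup.mem_subgroupOf] using hk) ⟨h, hh⟩
    simpa [Subgroup.mem_subgroupOf] using this
  · intro hcl
    constructor
    rintro ⟨k, hkH⟩ hk ⟨h, hh⟩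
    simp only [Subgroup.mem_subgroupOf] at hk ⊢
    exact hcl h hh k hk

lemma conj_map_eq_of_subgroupOf_normal {G : Type*} [Group G] {K H : Subgroup G} (hKH : K ≤ H)
    (hn : (K.subgroupOf H).Normal) {g : G} (hg : g ∈ H) :
    K.map (MulAut.conj g).toMonoidHom = K := by
  rw [subgroupOf_normal_iff hKH] at hn
  ext x
  simp only [Subgroup.mem_map, MulEquiv.coe_toMonoidHom, MulAut.conj_apply]
  constructor
  · rintro ⟨y, hy, rfl⟩
    exact hn g hg y hy
  · intro hx
    refine ⟨g⁻¹ * x * g, by simpa using hn g⁻¹ (inv_mem hg) x hx, by group⟩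

lemma normal_conj_map {G : Type*} [Group G] {M : Subgroup G} (h : M.Normal) (g : G) :
    M.map (MulAut.conj g).toMonoidHom = M := by
  ext x
  simp only [Subgroup.mem_map, MulEquiv.coe_toMonoidHom, MulAut.conj_apply]
  constructor
  · rintro ⟨y, hy, rfl⟩
    exact h.conj_mem y hy g
  · intro hx
    refine ⟨g⁻¹ * x * g, by simpa using h.conj_mem x hx g⁻¹, by group⟩

lemma conj_mem_of_map_eq {G : Type*} [Group G] {K : Subgroup G} {g x : G}
    (h : K.map (MulAut.conj g).toMonoidHom = K) (hx : x ∈ K) : g * x * g⁻¹ ∈ K := by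
  rw [← h]
  exact Subgroup.mem_map.mpr ⟨x, hx, rfl⟩

lemma conj_piResidualIn {G : Type*} [Group G] [Finite G] {M : Subgroup G} {g : G}
    (hg : M.map (MulAut.conj g).toMonoidHom = M) :
    (piResidualIn π M).map (MulAut.conj g).toMonoidHom = piResidualIn π M := by
  rw [piResidualIn_map_equiv π (MulAut.conj g) M, hg]

lemma comap_subgroupComap {G Q : Type*} [Group G] [Group Q] (f : G →* Q) (B T : Subgroup Q) :
    (T.subgroupOf B).comap (f.subgroupComap B) = (T.comap f).subgroupOf (B.comap f) := by
  ext x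
  simp [Subgroup.mem_subgroupOf, MonoidHom.subgroupComap_apply_coe]
  exact Iff.rfl

lemma subgroupComap_surjective {G Q : Type*} [Group G] [Group Q] {f : G →* Q}
    (hf : Function.Surjective f) (B : Subgroup Q) :
    Function.Surjective (f.subgroupComap B) := by
  rintro ⟨b, hb⟩
  obtain ⟨g, rfl⟩ := hf b
  exact ⟨⟨g, hb⟩, rfl⟩

end Helpers2

section Helpers3

variable (π : Set ℕ)

lemma piResidualIn_comap {G Q : Type*} [Group G] [Group Q] [Finite G] {f : G →* Q}
    (hf : Function.Surjective f) (A : Subgroup Q) :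
    piResidualIn π (A.comap f) = piResidualIn π ((piResidualIn π A).comap f) := by
  haveI : Finite Q := Finite.of_surjective f hf
  set T : Subgroup Q := piResidualIn π A with hT
  set A' : Subgroup G := A.comap f with hA'
  set M : Subgroup G := T.comap f with hM
  have hTA : T ≤ A := piResidualIn_le π A
  have hMA' : M ≤ A' := Subgroup.comap_mono hTA
  have hMnorm : (M.subgroupOf A').Normal := by
    rw [← comap_subgroupComap f A T]
    exact (piResidualIn_subgroupOf_normal π A).comap _
  have hMrel : ∀ p : ℕ, p.Prime → p ∣ M.relIndex A' → p ∈ π := by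
    intro p hp hd
    have heq : M.relIndex A' = T.relIndex A := by
      rw [Subgroup.relIndex, Subgroup.relIndex, ← comap_subgroupComap f A T,
        Subgroup.index_comap_of_surjective _ (subgroupComap_surjective hf A)]
    rw [heq] at hd
    exact piResidualIn_relIndex π A p hp hd
  have hRM : piResidualIn π A' ≤ M := piResidualIn_le_of π hMA' hMnorm hMrel
  apply le_antisymm
  · -- piResidualIn π A' ≤ piResidualIn π M
    refine piResidualIn_le_of π ((piResidualIn_le π M).trans hMA') ?_ ?_
    · rw [subgroupOf_normal_iff ((piResidualIn_le π M).trans hMA')]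
      intro a ha k hk
      have hconjM : M.map (MulAut.conj a).toMonoidHom = M :=
        conj_map_eq_of_subgroupOf_normal hMA' hMnorm ha
      exact conj_mem_of_map_eq (conj_piResidualIn π hconjM) hk
    · intro p hp hd
      rw [← Subgroup.relIndex_mul_relIndex (piResidualIn π M) M A'
        (piResidualIn_le π M) hMA'] at hd
      rcases hp.dvd_mul.mp hd with h | h
      · exact piResidualIn_relIndex π M p hp h
      · exact hMrel p hp h
  · -- piResidualIn π M ≤ piResidualIn π A'
    refine piResidualIn_le_of π hRM ?_ ?_
    · rw [subgroupOf_normal_iff hRM]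
      intro m hm k hk
      have hconj : (piResidualIn π A').map (MulAut.conj m).toMonoidHom = piResidualIn π A' :=
        conj_map_eq_of_subgroupOf_normal (piResidualIn_le π A')
          (piResidualIn_subgroupOf_normal π A') (hMA' hm)
      exact conj_mem_of_map_eq hconj hk
    · intro p hp hd
      haveI : ((piResidualIn π A').subgroupOf A').Normal := piResidualIn_subgroupOf_normal π A'
      have hdvd : ((piResidualIn π A').subgroupOf A').relIndex (M.subgroupOf A') ∣
          ((piResidualIn π A').subgroupOf A').index :=
        Subgroup.relIndex_dvd_index_of_normal _ _
      rw [Subgroup.relIndex_subgroupOf hMA'] at hdvd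
      exact piResidualIn_relIndex π A' p hp (hd.trans hdvd)

lemma isDnormal_comap {G Q : Type*} [Group G] [Group Q] [Finite G] {f : G →* Q}
    (hf : Function.Surjective f) {A : Subgroup Q} (hA : IsDnormal π A) :
    IsDnormal π (A.comap f) := by
  haveI : Finite Q := Finite.of_surjective f hf
  rcases hA with ⟨hsub, hnorm⟩ | ⟨hsub, hresn, hnr⟩
  · exact Or.inl ⟨hsub, hnorm.comap f⟩
  · refine Or.inr ⟨hsub, ?_, ?_⟩
    · rw [piResidualIn_comap π hf A]
      have hM : ((piResidualIn π A).comap f).Normal := hresn.comap f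
      constructor
      intro n hn g
      exact conj_mem_of_map_eq (conj_piResidualIn π (normal_conj_map hM g)) hn
    · intro x hx
      have hfx : f x ∈ piResidual π Q := by
        refine piResidual_le π (N := (piResidual π Q).comap f)
          ((piResidual_normal π Q).comap f) ?_ hx
        intro p hp hd
        refine piResidual_index π Q p hp ?_
        rwa [Subgroup.index_comap_of_surjective _ hf] at hd
      have hnx := hnr hfx
      rw [Subgroup.mem_normalizer_iff] at hnx ⊢
      intro y
      simp only [Subgroup.mem_comap, map_mul, map_inv]
      exact hnx (f y)

end Helpers3


/-- Lemma 1.4(5): if `N ≤ H` and `H/N` is `N^π`-Dsubnormal in `G/N`, then `H` is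
`N^π`-Dsubnormal in `G`. -/
theorem dsubnormal_of_quotient (π : Set ℕ) (hπ : ∀ p ∈ π, p.Prime)
    (G : Type*) [Group G] [Finite G] (N H : Subgroup G) [N.Normal] (hNH : N ≤ H)
    (h : IsDsubnormal π (H.map (QuotientGroup.mk' N))) :
    IsDsubnormal π H := by
  obtain ⟨n, c, hc0, hclast, hstep⟩ := h
  refine ⟨n, fun i => (c i).comap (QuotientGroup.mk' N), ?_, ?_, ?_⟩
  · show (c 0).comap (QuotientGroup.mk' N) = H
    rw [hc0, Subgroup.comap_map_eq, QuotientGroup.ker_mk', sup_eq_left.mpr hNH]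
  · show (c (Fin.last n)).comap (QuotientGroup.mk' N) = ⊤
    rw [hclast, Subgroup.comap_top]
  · intro i
    obtain ⟨hle, hD⟩ := hstep i
    refine ⟨Subgroup.comap_mono hle, ?_⟩
    have hsurj : Function.Surjective ((QuotientGroup.mk' N).subgroupComap (c i.succ)) :=
      subgroupComap_surjective (QuotientGroup.mk'_surjective N) _
    have hres := isDnormal_comap π hsurj hD
    rwa [comap_subgroupComap] at hres
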